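/- For every prime p ≥ 5, the sum ∑_{n=0}^{p-1} M_n of Motzkin numbers is congruent to 2 modulo p if p ≡ 1 (mod 4), and congruent to -2 modulo p if p ≡ 3 (mod 4). -/
import Mathlib

/-- The `n`-th Motzkin number, defined by `M_n = ∑_{k=0}^{⌊n/2⌋} C(n, 2k) * Catalan(k)`. -/
def motzkin (n : ℕ) : ℕ :=
  ∑ k ∈ Finset.range (n / 2 + 1), n.choose (2 * k) * catalan k

lemma choose_pred_cast (p : ℕ) (hp : p.Prime) :
    ∀ j, j < p → ((p - 1).choose j : ZMod p) = (-1) ^ j := by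
  intro j
  induction j with
  | zero => simp
  | succ j ih =>
    intro hj
    have h1 : p.choose (j + 1) = (p - 1).choose j + (p - 1).choose (j + 1) := by
      conv_lhs => rw [show p = (p - 1) + 1 by omega]
      exact Nat.choose_succ_succ _ _
    have h2 : ((p.choose (j + 1) : ℕ) : ZMod p) = 0 :=
      (ZMod.natCast_eq_zero_iff _ _).2
        (Nat.Prime.dvd_choose_self hp (Nat.succ_ne_zero j) hj)
    have h3 := ih (by omega)
    have h4 : ((p - 1).choose j : ZMod p) + ((p - 1).choose (j + 1) : ZMod p) = 0 := by
      rw [← Nat.cast_add, ← h1, h2]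
    rw [h3] at h4
    rw [pow_succ]
    linear_combination h4

lemma sum_range_choose_eq (p r : ℕ) (hp : 0 < p) :
    ∑ n ∈ Finset.range p, n.choose r = p.choose (r + 1) := by
  have h : ∑ n ∈ Finset.Icc r (p - 1), n.choose r = ((p - 1) + 1).choose (r + 1) :=
    Nat.sum_Icc_choose _ _
  rw [show (p - 1) + 1 = p by omega] at h
  rw [← h]
  rcases le_or_gt r (p - 1) with hr | hr
  · apply (Finset.sum_subset _ _).symm
    · intro x hx
      simp only [Finset.mem_Icc, Finset.mem_range] at *
      omega
    · intro x hx hx'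
      simp only [Finset.mem_Icc, Finset.mem_range] at *
      exact Nat.choose_eq_zero_of_lt (by omega)
  · rw [Finset.Icc_eq_empty_of_lt (by omega), Finset.sum_empty]
    apply Finset.sum_eq_zero
    intro x hx
    simp only [Finset.mem_range] at hx
    exact Nat.choose_eq_zero_of_lt (by omega)

theorem sum_motzkin_mod_p (p : ℕ) (hp : p.Prime) (hp5 : 5 ≤ p) :
    (p % 4 = 1 → (∑ n ∈ Finset.range p, (motzkin n : ZMod p)) = 2) ∧
    (p % 4 = 3 → (∑ n ∈ Finset.range p, (motzkin n : ZMod p)) = -2) := by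
  have hodd : p % 2 = 1 := by
    rcases hp.eq_two_or_odd with h | h <;> omega
  set m := (p - 1) / 2 with hm
  have hpm : p = 2 * m + 1 := by omega
  -- key identity in ℕ
  have key : ∑ n ∈ Finset.range p, motzkin n
      = ∑ k ∈ Finset.range (m + 1), p.choose (2 * k + 1) * catalan k := by
    have h1 : ∀ n ∈ Finset.range p,
        motzkin n = ∑ k ∈ Finset.range (m + 1), n.choose (2 * k) * catalan k := by
      intro n hn
      simp only [Finset.mem_range] at hn
      unfold motzkin
      apply Finset.sum_subset
      · intro x hx
        simp only [Finset.mem_range] at *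
        omega
      · intro x hx hx'
        simp only [Finset.mem_range] at *
        rw [Nat.choose_eq_zero_of_lt (by omega), zero_mul]
    rw [Finset.sum_congr rfl h1, Finset.sum_comm]
    apply Finset.sum_congr rfl
    intro k _
    rw [← Finset.sum_mul, sum_range_choose_eq p (2 * k) (by omega)]
  -- reduce the sum mod p to catalan m
  have hS : (∑ n ∈ Finset.range p, (motzkin n : ZMod p)) = (catalan m : ZMod p) := by
    rw [← Nat.cast_sum, key, Nat.cast_sum, Finset.sum_range_succ]
    have hz : ∀ k ∈ Finset.range m, ((p.choose (2 * k + 1) * catalan k : ℕ) : ZMod p) = 0 := by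
      intro k hk
      simp only [Finset.mem_range] at hk
      rw [Nat.cast_mul]
      have : ((p.choose (2 * k + 1) : ℕ) : ZMod p) = 0 :=
        (ZMod.natCast_eq_zero_iff _ _).2
          (Nat.Prime.dvd_choose_self hp (by omega) (by omega))
      rw [this, zero_mul]
    rw [Finset.sum_eq_zero hz, zero_add, show 2 * m + 1 = p from hpm.symm,
      Nat.choose_self, Nat.cast_mul, Nat.cast_one, one_mul]
  -- catalan m mod p
  have hc1 : (((m + 1 : ℕ)) : ZMod p) * (catalan m : ZMod p) = (-1) ^ m := by
    rw [← Nat.cast_mul, succ_mul_catalan_eq_centralBinom, Nat.centralBinom,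
      show 2 * m = p - 1 by omega]
    exact choose_pred_cast p hp m (by omega)
  have h2 : (2 : ZMod p) * ((m + 1 : ℕ) : ZMod p) = 1 := by
    have : ((2 * (m + 1) : ℕ) : ZMod p) = ((p + 1 : ℕ) : ZMod p) := by
      congr 1
      omega
    push_cast [ZMod.natCast_self] at this ⊢
    linear_combination this
  have hcat : (catalan m : ZMod p) = 2 * (-1) ^ m := by
    have : (catalan m : ZMod p) = 2 * (((m + 1 : ℕ) : ZMod p) * (catalan m : ZMod p)) := by
      rw [← mul_assoc, h2, one_mul]
    rw [this, hc1]
  rw [hS, hcat]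
  constructor
  · intro h4
    have he : Even m := Nat.even_iff.2 (by omega)
    rw [he.neg_one_pow]
    ring
  · intro h4
    have ho : Odd m := Nat.odd_iff.2 (by omega)
    rw [ho.neg_one_pow]
    ring
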